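/- If T is a bounded bijective linear operator on a Hilbert space Y and the operator T*A is coercive (i.e. inf over nonzero y of |⟨T*Ay, y⟩|/‖y‖² > 0), then A is bijective with bounded inverse. -/

import Mathlib

open scoped InnerProductSpace

theorem bijective_of_adjoint_comp_coercive
    {Y : Type*} [NormedAddCommGroup Y] [InnerProductSpace ℂ Y] [CompleteSpace Y]
    (A T : Y →L[ℂ] Y) (hT : Function.Bijective T)
    (hcoer : ∃ c : ℝ, 0 < c ∧ ∀ y : Y,
      c * ‖y‖ ^ 2 ≤ ‖(⟪((ContinuousLinearMap.adjoint T).comp A) y, y⟫_ℂ : ℂ)‖) :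
    Function.Bijective A ∧
      ∃ B : Y →L[ℂ] Y, B.comp A = ContinuousLinearMap.id ℂ Y ∧
        A.comp B = ContinuousLinearMap.id ℂ Y := by
  obtain ⟨c, hc, hb⟩ := hcoer
  set S : Y →L[ℂ] Y := (ContinuousLinearMap.adjoint T).comp A with hSdef
  -- lower bound : c‖y‖ ≤ ‖S y‖
  have hlow : ∀ y : Y, c * ‖y‖ ≤ ‖S y‖ := by
    intro y
    rcases eq_or_ne y 0 with rfl | hy
    · simp
    · have h1 : c * ‖y‖ ^ 2 ≤ ‖S y‖ * ‖y‖ :=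
        le_trans (hb y) (norm_inner_le_norm _ _)
      have hy' : 0 < ‖y‖ := norm_pos_iff.mpr hy
      nlinarith
  -- S injective
  have hSinj : Function.Injective S := by
    intro x y hxy
    have h0 : S (x - y) = 0 := by rw [map_sub, hxy, sub_self]
    have h1 := hlow (x - y)
    rw [h0, norm_zero] at h1
    have h2 : ‖x - y‖ ≤ 0 := by nlinarith [norm_nonneg (x - y)]
    have := norm_le_zero_iff.mp h2
    exact sub_eq_zero.mp this
  -- S has closed range
  have hanti : AntilipschitzWith (⟨c, hc.le⟩ : NNReal)⁻¹ S := by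
    apply ContinuousLinearMap.antilipschitz_of_bound
    intro x
    have h := hlow x
    change ‖x‖ ≤ c⁻¹ * ‖S x‖
    rw [le_inv_mul_iff₀ (by exact_mod_cast hc)]
    exact h
  have hclosed : IsClosed (Set.range S) := hanti.isClosed_range S.uniformContinuous
  -- orthogonal complement of range is trivial
  have horth : (LinearMap.range (S : Y →ₗ[ℂ] Y))ᗮ = ⊥ := by
    rw [Submodule.eq_bot_iff]
    intro y hy
    have h0 : ⟪S y, y⟫_ℂ = 0 :=
      (Submodule.mem_orthogonal _ y).mp hy (S y) ⟨y, rfl⟩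
    have := hb y
    rw [h0, norm_zero] at this
    have h2 : ‖y‖ ^ 2 ≤ 0 := le_of_not_gt fun h => absurd this (not_le.mpr (mul_pos hc h))
    have h3 : ‖y‖ ^ 2 = 0 := le_antisymm h2 (sq_nonneg _)
    exact norm_le_zero_iff.mp ((pow_eq_zero_iff two_ne_zero).mp h3).le
  -- range S = ⊤
  have hrange : LinearMap.range (S : Y →ₗ[ℂ] Y) = ⊤ := by
    have hcl : (LinearMap.range (S : Y →ₗ[ℂ] Y)).topologicalClosure = ⊤ :=
      Submodule.topologicalClosure_eq_top_iff.mpr horth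
    have hcs : IsClosed ((LinearMap.range (S : Y →ₗ[ℂ] Y) : Submodule ℂ Y) : Set Y) := by
      have : ((LinearMap.range (S : Y →ₗ[ℂ] Y) : Submodule ℂ Y) : Set Y) = Set.range S := by
        ext x; simp [LinearMap.mem_range]
      rw [this]; exact hclosed
    rw [← hcl]
    exact (hcs.submodule_topologicalClosure_eq).symm
  have hSsurj : Function.Surjective S := LinearMap.range_eq_top.mp hrange
  -- adjoint T is injective
  have hT'inj : Function.Injective (ContinuousLinearMap.adjoint T) := by
    intro u v huv
    apply ext_inner_right ℂ
    intro x
    obtain ⟨w, rfl⟩ := hT.2 x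
    rw [← ContinuousLinearMap.adjoint_inner_left, ← ContinuousLinearMap.adjoint_inner_left, huv]
  -- A bijective
  have hAinj : Function.Injective A := by
    intro x y hxy
    exact hSinj (by simp [hSdef, ContinuousLinearMap.comp_apply, hxy])
  have hAsurj : Function.Surjective A := by
    intro z
    obtain ⟨y, hy⟩ := hSsurj (ContinuousLinearMap.adjoint T z)
    exact ⟨y, hT'inj hy⟩
  have hAbij : Function.Bijective A := ⟨hAinj, hAsurj⟩
  refine ⟨hAbij, ?_⟩
  have hker : A.ker = ⊥ := LinearMap.ker_eq_bot.mpr hAinj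
  have hrangeA : A.range = ⊤ := LinearMap.range_eq_top.mpr hAsurj
  let e := ContinuousLinearEquiv.ofBijective A hker hrangeA
  refine ⟨e.symm.toContinuousLinearMap, ?_, ?_⟩
  · ext x
    have : e x = A x := ContinuousLinearEquiv.coeFn_ofBijective A hker hrangeA ▸ rfl
    simp only [ContinuousLinearMap.comp_apply, ContinuousLinearMap.id_apply,
      ContinuousLinearEquiv.coe_coe]
    rw [← this]
    exact e.symm_apply_apply x
  · ext x
    simp only [ContinuousLinearMap.comp_apply, ContinuousLinearMap.id_apply,
      ContinuousLinearEquiv.coe_coe]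
    have : A (e.symm x) = e (e.symm x) :=
      (congrFun (ContinuousLinearEquiv.coeFn_ofBijective A hker hrangeA) (e.symm x)).symm
    rw [this, e.apply_symm_apply]
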